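/- In type B_n with positive roots Φ⁺ = { x_i ± x_j | 1 ≤ i < j ≤ n } ∪ { x_i | 1 ≤ i ≤ n }, the derivation ψ^B_{i,2n+1−i} = ∑_{k=1}^{i} (∏_{ℓ=i+1}^{n} (x_k − x_ℓ)(x_k + x_ℓ)) x_k ∂_k satisfies ψ^B_{i,2n+1−i}(α) ∈ (α) for every α ∈ Φ⁺ and every 1 ≤ i ≤ n. -/

import Mathlib

open MvPolynomial

noncomputable section

/-- The derivation `ψ^B_{i,2n+1−i} = ∑_{k=1}^{i} (∏_{ℓ=i+1}^{n} (x_k−x_ℓ)(x_k+x_ℓ)) x_k ∂_k`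
of type `B_n`, applied to a polynomial `p`. -/
def psiBtop (n i : ℕ) (p : MvPolynomial ℕ ℝ) : MvPolynomial ℕ ℝ :=
  ∑ k ∈ Finset.Icc 1 i,
    (∏ l ∈ Finset.Icc (i + 1) n, ((X k - X l) * (X k + X l))) * X k * pderiv k p

lemma dvd_prod_sub_prod {R : Type*} [CommRing R] {ι : Type*} (s : Finset ι)
    (a : R) (f g : ι → R) (h : ∀ j ∈ s, a ∣ f j - g j) :
    a ∣ ∏ j ∈ s, f j - ∏ j ∈ s, g j := by
  classical
  induction s using Finset.induction_on with
  | empty => simp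
  | insert _ _ hx ih =>
    rename_i x s
    rw [Finset.prod_insert hx, Finset.prod_insert hx]
    have h1 := h x (Finset.mem_insert_self x s)
    have h2 := ih (fun j hj => h j (Finset.mem_insert_of_mem hj))
    have key : f x * ∏ j ∈ s, f j - g x * ∏ j ∈ s, g j =
        f x * (∏ j ∈ s, f j - ∏ j ∈ s, g j) + (f x - g x) * ∏ j ∈ s, g j := by ring
    rw [key]
    exact dvd_add (h2.mul_left _) (h1.mul_right _)

lemma sum_pderiv_aux (i p : ℕ) (c : ℕ → MvPolynomial ℕ ℝ) :
    ∑ k ∈ Finset.Icc 1 i, c k * X k * pderiv k (X p : MvPolynomial ℕ ℝ)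
      = if p ∈ Finset.Icc 1 i then c p * X p else 0 := by
  rw [← Finset.sum_ite_eq' (Finset.Icc 1 i) p (fun k => c k * X k)]
  refine Finset.sum_congr rfl fun k _ => ?_
  by_cases h : k = p
  · subst h; simp [pderiv_X_self]
  · simp [pderiv_X_of_ne (Ne.symm h), h]

lemma psiBtop_key (n i : ℕ) (hin : i ≤ n) (p q : ℕ) (hp1 : 1 ≤ p) (hpq : p < q)
    (hqn : q ≤ n) (e : ℝ) (he : e * e = 1) :
    (X p + C e * X q : MvPolynomial ℕ ℝ) ∣ psiBtop n i (X p + C e * X q) := by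
  set c : ℕ → MvPolynomial ℕ ℝ :=
    fun k => ∏ l ∈ Finset.Icc (i + 1) n, ((X k - X l) * (X k + X l)) with hc
  have hee : (C e : MvPolynomial ℕ ℝ) * C e = 1 := by rw [← C_mul, he, C_1]
  have hψ : psiBtop n i (X p + C e * X q) =
      (if p ∈ Finset.Icc 1 i then c p * X p else 0) +
      C e * (if q ∈ Finset.Icc 1 i then c q * X q else 0) := by
    rw [psiBtop, ← sum_pderiv_aux i p c, ← sum_pderiv_aux i q c, Finset.mul_sum,
      ← Finset.sum_add_distrib]
    refine Finset.sum_congr rfl fun k _ => ?_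
    have hCe : pderiv k (C e * X q : MvPolynomial ℕ ℝ) = C e * pderiv k (X q) := by
      simp
    rw [map_add, hCe, hc]
    ring
  rw [hψ]
  by_cases hqi : q ∈ Finset.Icc 1 i
  · have hpi : p ∈ Finset.Icc 1 i := by
      simp only [Finset.mem_Icc] at hqi ⊢
      exact ⟨hp1, le_trans hpq.le hqi.2⟩
    rw [if_pos hpi, if_pos hqi]
    have hdvd : (X p + C e * X q : MvPolynomial ℕ ℝ) ∣ c p - c q := by
      refine dvd_prod_sub_prod _ _ _ _ fun l _ => ?_
      refine ⟨X p - C e * X q, ?_⟩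
      linear_combination (X q * X q : MvPolynomial ℕ ℝ) * hee
    obtain ⟨d, hd⟩ := hdvd
    refine ⟨c p - C e * d * X q, ?_⟩
    linear_combination (-(C e * X q)) * hd
  · by_cases hpi : p ∈ Finset.Icc 1 i
    · rw [if_pos hpi, if_neg hqi, mul_zero, add_zero]
      have hql : q ∈ Finset.Icc (i + 1) n := by
        simp only [Finset.mem_Icc] at hqi ⊢
        refine ⟨?_, hqn⟩
        omega
      have h1 : (X p + C e * X q : MvPolynomial ℕ ℝ) ∣
          (X p - X q) * (X p + X q) := by
        refine ⟨X p - C e * X q, ?_⟩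
        linear_combination ((X q * X q) : MvPolynomial ℕ ℝ) * hee
      exact (h1.trans (Finset.dvd_prod_of_mem
        (fun l => (X p - X l) * (X p + X l)) hql)).mul_right _
    · rw [if_neg hpi, if_neg hqi, mul_zero, add_zero]
      exact dvd_zero _

/-- for every positive root `α` of type `B_n`
(`α = x_p ± x_q` with `p < q`, or `α = x_p`), and every `1 ≤ i ≤ n`,
`ψ^B_{i,2n+1−i}(α)` lies in the principal ideal `(α)`. -/
theorem statement7 (n i : ℕ) (hi : 1 ≤ i) (hin : i ≤ n)
    (α : MvPolynomial ℕ ℝ)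
    (hα : (∃ p q, 1 ≤ p ∧ p < q ∧ q ≤ n ∧ (α = X p - X q ∨ α = X p + X q)) ∨
          (∃ p, 1 ≤ p ∧ p ≤ n ∧ α = X p)) :
    psiBtop n i α ∈ Ideal.span {α} := by
  rw [Ideal.mem_span_singleton]
  rcases hα with ⟨p, q, hp1, hpq, hqn, hcase⟩ | ⟨p, hp1, hpn, hα⟩
  · rcases hcase with h | h
    · have hα' : α = X p + C (-1 : ℝ) * X q := by
        rw [h, map_neg, C_1]; ring
      rw [hα']
      exact psiBtop_key n i hin p q hp1 hpq hqn (-1) (by norm_num)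
    · have hα' : α = X p + C (1 : ℝ) * X q := by rw [h, C_1]; ring
      rw [hα']
      exact psiBtop_key n i hin p q hp1 hpq hqn 1 (by norm_num)
  · subst hα
    rw [psiBtop, sum_pderiv_aux i p
      (fun k => ∏ l ∈ Finset.Icc (i + 1) n, ((X k - X l) * (X k + X l)))]
    by_cases hpi : p ∈ Finset.Icc 1 i
    · rw [if_pos hpi]; exact Dvd.dvd.mul_left (dvd_refl _) _
    · rw [if_neg hpi]; exact dvd_zero _
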